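/- Let φ : ℝ^d → ℝ be C² with compact support and let v : ℝ^d → ℝ^d be a C¹, compactly supported, divergence-free vector field. Then ∫_{ℝ^d} ∇φ(x) · ∇( v·∇φ )(x) dx = ∫_{ℝ^d} (∇φ(x)⊗∇φ(x)) : Dv(x) dx, where A : B = ∑_{i,j} A_{ij}B_{ij} and Dv(x) is the Fréchet derivative of v at x viewed as a matrix. -/

import Mathlib

open MeasureTheory

variable {d : ℕ}

private lemma euclid_decomp' (w : EuclideanSpace ℝ (Fin d)) :
    w = ∑ j, w j • EuclideanSpace.single j (1:ℝ) := by
  ext k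
  rw [WithLp.ofLp_sum, Finset.sum_apply]
  simp [EuclideanSpace.single_apply]

private lemma clm_apply_sum' (L : EuclideanSpace ℝ (Fin d) →L[ℝ] ℝ) (w : EuclideanSpace ℝ (Fin d)) :
    L w = ∑ j, w j * L (EuclideanSpace.single j (1:ℝ)) := by
  conv_lhs => rw [euclid_decomp' w]
  rw [map_sum]
  simp [smul_eq_mul]

private abbrev Ed (d : ℕ) : Type := EuclideanSpace ℝ (Fin d)

/-- For `φ : ℝ^d → ℝ` a `C²` compactly supported scalar field and
`v : ℝ^d → ℝ^d` a `C¹`, compactly supported, divergence-free vector field,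
`∫ ∇φ · ∇(v·∇φ) = ∫ (∇φ ⊗ ∇φ) : Dv`, where `A : B = ∑ i j, A i j * B i j`,
`(Dv)_{ij}(x) = Dv(x)(e_j) i`, `∂_i φ(x) = Dφ(x)(e_i)` and `(v·∇φ)(x) = Dφ(x)(v x)`. -/
theorem integral_grad_dot_grad_convective_eq_capillary
    (d : ℕ) (φ : EuclideanSpace ℝ (Fin d) → ℝ)
    (v : EuclideanSpace ℝ (Fin d) → EuclideanSpace ℝ (Fin d))
    (hφ : ContDiff ℝ 2 φ) (hφc : HasCompactSupport φ)
    (hv : ContDiff ℝ 1 v) (hvc : HasCompactSupport v)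
    (hdiv : ∀ x, ∑ i, fderiv ℝ v x (EuclideanSpace.single i (1:ℝ)) i = 0) :
    ∫ x, ∑ i, fderiv ℝ φ x (EuclideanSpace.single i (1:ℝ)) *
        fderiv ℝ (fun y => fderiv ℝ φ y (v y)) x (EuclideanSpace.single i (1:ℝ))
      = ∫ x, ∑ i, ∑ j,
          (fderiv ℝ φ x (EuclideanSpace.single i (1:ℝ)) *
            fderiv ℝ φ x (EuclideanSpace.single j (1:ℝ))) *
          fderiv ℝ v x (EuclideanSpace.single j (1:ℝ)) i := by
  set e : Fin d → Ed d := fun i => EuclideanSpace.single i (1:ℝ) with he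
  set g : Ed d → (Ed d →L[ℝ] ℝ) := fderiv ℝ φ with hgdef
  have hg : ContDiff ℝ 1 g := hφ.fderiv_right (by norm_num)
  have hgd : Differentiable ℝ g := hg.differentiable one_ne_zero
  have hφd : Differentiable ℝ φ := hφ.differentiable (by norm_num)
  have hvd : Differentiable ℝ v := hv.differentiable one_ne_zero
  set G : Ed d → (Ed d →L[ℝ] (Ed d →L[ℝ] ℝ)) := fderiv ℝ g with hGdef
  -- symmetry of second derivative
  have hsymm : ∀ x w u, G x w u = G x u w := fun x w u =>
    second_derivative_symmetric (fun y => (hφd y).hasFDerivAt) ((hgd x).hasFDerivAt) w u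
  -- ψ = |∇φ|²
  set ψ : Ed d → ℝ := fun x => ∑ i, g x (e i) * g x (e i) with hψdef
  have hgi : ∀ i : Fin d, ContDiff ℝ 1 (fun x => g x (e i)) :=
    fun i => hg.clm_apply contDiff_const
  have hψ1 : ContDiff ℝ 1 ψ :=
    ContDiff.sum fun i _ => (hgi i).mul (hgi i)
  have hψd : Differentiable ℝ ψ := hψ1.differentiable one_ne_zero
  -- derivative of coordinates of g
  have hgider : ∀ (i : Fin d) x, fderiv ℝ (fun y => g y (e i)) x = (G x).flip (e i) := by
    intro i x
    rw [fderiv_clm_apply (hgd x) (differentiableAt_const _)]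
    ext w
    simp [hGdef]
  -- derivative of ψ
  have hψder : ∀ x w, fderiv ℝ ψ x w = ∑ i, 2 * (g x (e i) * G x w (e i)) := by
    intro x w
    rw [hψdef]
    rw [fderiv_fun_sum (A := fun i x => g x (e i) * g x (e i)) (fun i _ => (((hgi i).differentiable one_ne_zero x).mul
      ((hgi i).differentiable one_ne_zero x)))]
    rw [ContinuousLinearMap.sum_apply]
    refine Finset.sum_congr rfl fun i _ => ?_
    rw [fderiv_fun_mul ((hgi i).differentiable one_ne_zero x) ((hgi i).differentiable one_ne_zero x)]
    rw [hgider]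
    simp [ContinuousLinearMap.flip_apply, hsymm x w (e i)]
    ring
  -- pointwise key identity
  have key : ∀ x, ∑ i, g x (e i) * fderiv ℝ (fun y => fderiv ℝ φ y (v y)) x (e i)
      = (∑ i, ∑ j, (g x (e i) * g x (e j)) * fderiv ℝ v x (e j) i)
        + ∑ j, v x j * ((1/2) * fderiv ℝ ψ x (e j)) := by
    intro x
    have hprod : ∀ i, fderiv ℝ (fun y => fderiv ℝ φ y (v y)) x (e i)
        = g x (fderiv ℝ v x (e i)) + G x (e i) (v x) := by
      intro i
      rw [fderiv_clm_apply (hgd x) (hvd x)]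
      simp [hGdef]
    calc ∑ i, g x (e i) * fderiv ℝ (fun y => fderiv ℝ φ y (v y)) x (e i)
        = ∑ i, (g x (e i) * g x (fderiv ℝ v x (e i))
            + g x (e i) * G x (e i) (v x)) := by
          refine Finset.sum_congr rfl fun i _ => ?_; rw [hprod i]; ring
      _ = (∑ i, g x (e i) * g x (fderiv ℝ v x (e i)))
            + ∑ i, g x (e i) * G x (e i) (v x) := Finset.sum_add_distrib
      _ = (∑ i, ∑ j, (g x (e i) * g x (e j)) * fderiv ℝ v x (e j) i)
            + ∑ j, v x j * ((1/2) * fderiv ℝ ψ x (e j)) := by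
          congr 1
          · rw [Finset.sum_comm]
            refine Finset.sum_congr rfl fun i _ => ?_
            rw [clm_apply_sum' (g x) (fderiv ℝ v x (e i)), Finset.mul_sum]
            refine Finset.sum_congr rfl fun j _ => ?_
            ring
          · have : ∀ i, G x (e i) (v x) = ∑ j, v x j * G x (e j) (e i) := by
              intro i
              rw [clm_apply_sum' (G x (e i)) (v x)]
              refine Finset.sum_congr rfl fun j _ => ?_
              rw [hsymm x (e i) (e j)]
            calc ∑ i, g x (e i) * G x (e i) (v x)
                = ∑ i, ∑ j, v x j * (g x (e i) * G x (e j) (e i)) := by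
                  refine Finset.sum_congr rfl fun i _ => ?_
                  rw [this i, Finset.mul_sum]
                  refine Finset.sum_congr rfl fun j _ => ?_; ring
              _ = ∑ j, ∑ i, v x j * (g x (e i) * G x (e j) (e i)) := Finset.sum_comm
              _ = ∑ j, v x j * ((1/2) * fderiv ℝ ψ x (e j)) := by
                  refine Finset.sum_congr rfl fun j _ => ?_
                  rw [hψder x (e j), Finset.mul_sum, Finset.mul_sum]
                  refine Finset.sum_congr rfl fun i _ => ?_; ring
  -- continuity facts
  have hGc : Continuous G := (hg.fderiv_right (m := 0) (by norm_num)).continuous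
  have hgc : Continuous g := hg.continuous
  have hvc' : Continuous v := hv.continuous
  have hDvc : Continuous (fderiv ℝ v) := (hv.fderiv_right (m := 0) (by norm_num)).continuous
  have hψc : Continuous ψ := hψ1.continuous
  have hψ'c : Continuous (fderiv ℝ ψ) := (hψ1.fderiv_right (m := 0) (by norm_num)).continuous
  -- compact support facts
  have hgcs : HasCompactSupport g := hφc.fderiv (𝕜 := ℝ)
  have hψcs : HasCompactSupport ψ :=
    hgcs.comp_left (g := fun L : Ed d →L[ℝ] ℝ => ∑ i, L (e i) * L (e i)) (by simp)
  have hvjcs : ∀ j : Fin d, HasCompactSupport (fun x => v x j) :=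
    fun j => hvc.comp_left (g := fun w : Ed d => w j) rfl
  have hDvcs : HasCompactSupport (fderiv ℝ v) := hvc.fderiv (𝕜 := ℝ)
  -- integrability of A
  have hAint : Integrable (fun x => ∑ i, ∑ j,
      (g x (e i) * g x (e j)) * fderiv ℝ v x (e j) i) volume := by
    apply integrable_finset_sum
    intro i _
    apply integrable_finset_sum
    intro j _
    apply Continuous.integrable_of_hasCompactSupport
    · exact ((hgc.clm_apply continuous_const).mul (hgc.clm_apply continuous_const)).mul
        ((EuclideanSpace.proj i : Ed d →L[ℝ] ℝ).continuous.comp (hDvc.clm_apply continuous_const))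
    · exact (hDvcs.comp_left (g := fun L : Ed d →L[ℝ] Ed d => L (e j) i) (by simp)).mul_left
  -- integrability of the terms of B
  have hBjint : ∀ j : Fin d, Integrable (fun x => v x j * ((1/2) * fderiv ℝ ψ x (e j))) volume := by
    intro j
    apply Continuous.integrable_of_hasCompactSupport
    · exact ((EuclideanSpace.proj j : Ed d →L[ℝ] ℝ).continuous.comp hvc').mul
        (continuous_const.mul (hψ'c.clm_apply continuous_const))
    · exact (hvjcs j).mul_right
  have hBint : Integrable (fun x => ∑ j, v x j * ((1/2) * fderiv ℝ ψ x (e j))) volume :=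
    integrable_finset_sum _ fun j _ => hBjint j
  -- rewrite the LHS integral
  have hLHS : ∫ x, ∑ i, fderiv ℝ φ x (e i) *
        fderiv ℝ (fun y => fderiv ℝ φ y (v y)) x (e i)
      = (∫ x, ∑ i, ∑ j, (g x (e i) * g x (e j)) * fderiv ℝ v x (e j) i)
        + ∫ x, ∑ j, v x j * ((1/2) * fderiv ℝ ψ x (e j)) := by
    rw [← integral_add hAint hBint]
    exact integral_congr_ae (Filter.Eventually.of_forall fun x => key x)
  rw [hLHS]
  -- it remains to show the second integral vanishes
  have hB0 : (∫ x, ∑ j, v x j * ((1/2) * fderiv ℝ ψ x (e j))) = 0 := by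
    rw [integral_finset_sum _ fun j _ => hBjint j]
    have hcoord : ∀ (j : Fin d) x, fderiv ℝ (fun y => v y j) x (e j) = fderiv ℝ v x (e j) j := by
      intro j x
      have h : (fun y => v y j) = fun y => (EuclideanSpace.proj j : Ed d →L[ℝ] ℝ) (v y) := rfl
      rw [h, fderiv_clm_apply (differentiableAt_const _) (hvd x)]
      simp
    have hibp : ∀ j : Fin d, ∫ x, v x j * fderiv ℝ ψ x (e j)
        = - ∫ x, fderiv ℝ v x (e j) j * ψ x := by
      intro j
      have h1 : Integrable (fun x => fderiv ℝ (fun y => v y j) x (e j) * ψ x) volume := by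
        apply Continuous.integrable_of_hasCompactSupport
        · have : Continuous fun x => fderiv ℝ (fun y => v y j) x (e j) := by
            have : (fun x => fderiv ℝ (fun y => v y j) x (e j))
                = fun x => fderiv ℝ v x (e j) j := by
              funext x; exact hcoord j x
            rw [this]
            exact (EuclideanSpace.proj j : Ed d →L[ℝ] ℝ).continuous.comp
              (hDvc.clm_apply continuous_const)
          exact this.mul hψc
        · exact hψcs.mul_left
      have h2 : Integrable (fun x => v x j * fderiv ℝ ψ x (e j)) volume := by
        apply Continuous.integrable_of_hasCompactSupport
        · exact ((EuclideanSpace.proj j : Ed d →L[ℝ] ℝ).continuous.comp hvc').mul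
            (hψ'c.clm_apply continuous_const)
        · exact (hvjcs j).mul_right
      have h3 : Integrable (fun x => v x j * ψ x) volume := by
        apply Continuous.integrable_of_hasCompactSupport
        · exact ((EuclideanSpace.proj j : Ed d →L[ℝ] ℝ).continuous.comp hvc').mul hψc
        · exact (hvjcs j).mul_right
      have hfd : Differentiable ℝ (fun y => v y j) :=
        fun x => ((EuclideanSpace.proj j : Ed d →L[ℝ] ℝ).differentiableAt).comp x (hvd x)
      have := integral_mul_fderiv_eq_neg_fderiv_mul_of_integrable
        (f := fun y => v y j) (g := ψ) (v := e j) (μ := volume) h1 h2 h3 (fun x _ => hfd x) (fun x _ => hψd x)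
      rw [this]
      congr 1
      apply integral_congr_ae
      filter_upwards with x
      rw [hcoord j x]
    have step : ∀ j : Fin d, ∫ x, v x j * ((1/2) * fderiv ℝ ψ x (e j))
        = (1/2) * ∫ x, v x j * fderiv ℝ ψ x (e j) := by
      intro j
      rw [← integral_const_mul]
      apply integral_congr_ae
      filter_upwards with x
      ring
    calc ∑ j, ∫ x, v x j * ((1/2) * fderiv ℝ ψ x (e j))
        = ∑ j, (1/2) * (- ∫ x, fderiv ℝ v x (e j) j * ψ x) := by
          refine Finset.sum_congr rfl fun j _ => ?_
          rw [step j, hibp j]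
      _ = -(1/2) * ∑ j, ∫ x, fderiv ℝ v x (e j) j * ψ x := by
          rw [Finset.mul_sum]
          refine Finset.sum_congr rfl fun j _ => ?_; ring
      _ = -(1/2) * ∫ x, ∑ j, fderiv ℝ v x (e j) j * ψ x := by
          rw [integral_finset_sum]
          intro j _
          apply Continuous.integrable_of_hasCompactSupport
          · exact ((EuclideanSpace.proj j : Ed d →L[ℝ] ℝ).continuous.comp
              (hDvc.clm_apply continuous_const)).mul hψc
          · exact hψcs.mul_left
      _ = 0 := by
          have : ∀ x, ∑ j, fderiv ℝ v x (e j) j * ψ x = 0 := by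
            intro x
            rw [← Finset.sum_mul, hdiv x, zero_mul]
          rw [integral_congr_ae (Filter.Eventually.of_forall this)]
          simp
  rw [hB0, add_zero]
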